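/- Let L be an invertible lower triangular real p×p matrix and let A be a real p×p matrix such that P A Pᵀ is lower triangular for some permutation matrix P. Assume L Lᵀ = A Aᵀ. If the k-th column of L is proportional to the j-th column of A, that is, L e_k = c · (A e_j) for some nonzero real c, then k = j. -/
import Mathlib

open Matrix OrderDual Finset

/-- lower triangular entry condition gives `BlockTriangular _ toDual`. -/
lemma lowerTri_blockTriangular {p : ℕ} {R : Type*} [CommRing R]
    (M : Matrix (Fin p) (Fin p) R) (h : ∀ i j : Fin p, i < j → M i j = 0) :
    M.BlockTriangular toDual := fun i j hij => h i j (by exact hij)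

/-- diagonal entries of an invertible lower-triangular matrix are nonzero. -/
lemma diag_ne_zero_of_lowerTri {p : ℕ} (M : Matrix (Fin p) (Fin p) ℝ)
    (h : ∀ i j : Fin p, i < j → M i j = 0) (hdet : M.det ≠ 0) (i : Fin p) :
    M i i ≠ 0 := by
  rw [Matrix.det_of_lowerTriangular M (lowerTri_blockTriangular M h)] at hdet
  exact fun h0 => hdet (Finset.prod_eq_zero (Finset.mem_univ i) h0)

/-- Auxiliary lemma (Janzing–Schkoda) used in the second proof of Lemma C.1 of
the paper: if `L` is invertible lower triangular, `A` becomes lower triangular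
after permuting rows and columns by `σ`, `L Lᵀ = A Aᵀ`, and the `k`-th column of
`L` equals `c` times the `j`-th column of `A` for some `c ≠ 0`, then `k = j`. -/
theorem proportional_columns_same_index
    {p : ℕ} (L A : Matrix (Fin p) (Fin p) ℝ)
    (hL : IsUnit L)
    (hLtri : ∀ i j : Fin p, i < j → L i j = 0)
    (σ : Equiv.Perm (Fin p))
    (htri : ∀ i j : Fin p, i < j → A (σ i) (σ j) = 0)
    (hLL : L * Lᵀ = A * Aᵀ)
    (k j : Fin p) (c : ℝ) (hc : c ≠ 0)
    (hcol : ∀ i : Fin p, L i k = c * A i j) :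
    k = j := by
  have hLdet : L.det ≠ 0 := by
    have := (Matrix.isUnit_iff_isUnit_det L).mp hL
    simpa [isUnit_iff_ne_zero] using this
  have hAdet : A.det ≠ 0 := by
    have h2 : L.det ^ 2 = A.det ^ 2 := by
      have := congrArg Matrix.det hLL
      simpa [Matrix.det_mul, Matrix.det_transpose, sq] using this
    intro h
    rw [h] at h2
    simp [pow_eq_zero_iff] at h2
    exact hLdet h2
  have hAu : IsUnit A.det := isUnit_iff_ne_zero.mpr hAdet
  have hLu : IsUnit L.det := isUnit_iff_ne_zero.mpr hLdet
  -- B := permuted A, lower triangular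
  set B := A.submatrix σ σ with hB
  have hBdet : B.det ≠ 0 := by rwa [hB, Matrix.det_submatrix_equiv_self]
  have hAjj : A j j ≠ 0 := by
    have := diag_ne_zero_of_lowerTri B (fun i j h => htri i j h) hBdet (σ.symm j)
    simpa [hB] using this
  -- Fact 1 : k ≤ j
  have hkj : k ≤ j := by
    by_contra h
    push_neg at h
    have := hLtri j k h
    rw [hcol j] at this
    exact (mul_ne_zero hc hAjj) this
  -- inverse triangularity
  have hLinvTri : ∀ i j : Fin p, i < j → L⁻¹ i j = 0 := by
    have : Invertible L := hL.invertible
    have := Matrix.blockTriangular_inv_of_blockTriangular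
      (lowerTri_blockTriangular L hLtri)
    intro i j hij
    exact this (show toDual j < toDual i by exact hij)
  have hAinvjj : A⁻¹ j j ≠ 0 := by
    have hBu : IsUnit B := (Matrix.isUnit_iff_isUnit_det B).mpr
      (isUnit_iff_ne_zero.mpr hBdet)
    have : Invertible B := hBu.invertible
    have htriB := Matrix.blockTriangular_inv_of_blockTriangular
      (lowerTri_blockTriangular B (fun i j h => htri i j h))
    have hBinvdet : B⁻¹.det ≠ 0 := by
      rw [Matrix.det_nonsing_inv]
      simpa [Ring.inverse_eq_inv] using inv_ne_zero hBdet
    have := diag_ne_zero_of_lowerTri B⁻¹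
      (fun i j hij => htriB (show toDual j < toDual i by exact hij)) hBinvdet (σ.symm j)
    rw [hB, Matrix.inv_submatrix_equiv] at this
    simpa using this
  -- key algebraic identity
  have hAA : A⁻¹ * A = 1 := Matrix.nonsing_inv_mul A hAu
  have hstep : ∀ i : Fin p, (A⁻¹ * L) i k = c * (1 : Matrix (Fin p) (Fin p) ℝ) i j := by
    intro i
    calc (A⁻¹ * L) i k = ∑ n, A⁻¹ i n * L n k := Matrix.mul_apply
      _ = ∑ n, A⁻¹ i n * (c * A n j) := by simp only [hcol]
      _ = c * ∑ n, A⁻¹ i n * A n j := by rw [Finset.mul_sum]; congr 1; ext n; ring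
      _ = c * (A⁻¹ * A) i j := by rw [Matrix.mul_apply]
      _ = c * (1 : Matrix (Fin p) (Fin p) ℝ) i j := by rw [hAA]
  have hTdetA : IsUnit Aᵀ.det := by rwa [Matrix.det_transpose]
  have hTdetL : IsUnit Lᵀ.det := by rwa [Matrix.det_transpose]
  have h2 : A⁻¹ * L = Aᵀ * (Lᵀ)⁻¹ := by
    have e1 : A * (A⁻¹ * L) = L := by
      rw [← Matrix.mul_assoc, Matrix.mul_nonsing_inv A hAu, Matrix.one_mul]
    have e2 : A * (Aᵀ * (Lᵀ)⁻¹) = L := by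
      rw [← Matrix.mul_assoc, ← hLL, Matrix.mul_assoc,
        Matrix.mul_nonsing_inv Lᵀ hTdetL, Matrix.mul_one]
    have hA : IsUnit A := (Matrix.isUnit_iff_isUnit_det A).mpr hAu
    exact hA.mul_left_cancel (e1.trans e2.symm)
  have h3 : (Lᵀ)⁻¹ = (Aᵀ)⁻¹ * (A⁻¹ * L) := by
    rw [h2, ← Matrix.mul_assoc, Matrix.nonsing_inv_mul Aᵀ hTdetA, Matrix.one_mul]
  have key : L⁻¹ k j = c * A⁻¹ j j := by
    have : (Lᵀ)⁻¹ j k = c * (Aᵀ)⁻¹ j j := by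
      rw [h3, Matrix.mul_apply]
      rw [Finset.sum_congr rfl (fun n _ => by rw [hstep n])]
      simp [Matrix.one_apply, mul_comm]
    rw [← Matrix.transpose_nonsing_inv, ← Matrix.transpose_nonsing_inv] at this
    simpa using this
  -- Fact 2 : j ≤ k
  have hjk : j ≤ k := by
    by_contra h
    push_neg at h
    have := hLinvTri k j h
    rw [key] at this
    exact (mul_ne_zero hc hAinvjj) this
  exact le_antisymm hkj hjk
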